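/- arXiv:1909.08967 — 4 statements merged into one kernel-verified Lean document; each statement's English description precedes it below -/
import Mathlib

section
/- Fix 0 ≤ k < n and p > 1. There is a constant C > 0 such that every x ∈ W^{1,p}([0,1],ℝ^{2n}) satisfying x(0), x(1) ∈ ℝ^{n,k} and ∫₀¹ x(t) dt ∈ J(V₀^{n,k}) obeys ‖x‖_{L^∞} ≤ C‖ẋ‖_{L^p}. -/
open MeasureTheory Set Filter
open scoped Pointwise

noncomputable section

abbrev Esp (n : ℕ) := EuclideanSpace ℝ (Fin (2 * n))

/-- The standard complex structure `J` on `ℝ^{2n}`, sending `(q, p)` to `(-p, q)`. -/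
def Jfun (n : ℕ) (x : Esp n) : Esp n := WithLp.toLp 2 fun (i : Fin (2 * n)) =>
  if h : (i : ℕ) < n then -x ⟨(i : ℕ) + n, by omega⟩
  else x ⟨(i : ℕ) - n, by have := i.isLt; omega⟩

/-- The coisotropic subspace `ℝ^{n,k} = {(q₁,…,qₙ,p₁,…,p_k,0,…,0)}` of `ℝ^{2n}`. -/
def Rnk (n k : ℕ) : Set (Esp n) :=
  {x | ∀ i : Fin (2 * n), n + k ≤ (i : ℕ) → x i = 0}

/-- The subspace `V₀^{n,k} = {(0,…,0,q_{k+1},…,qₙ,0,…,0)}` of `ℝ^{2n}`. -/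
def V0 (n k : ℕ) : Set (Esp n) :=
  {x | ∀ i : Fin (2 * n), ((i : ℕ) < k ∨ n ≤ (i : ℕ)) → x i = 0}

lemma coord_le {m : ℕ} (y : EuclideanSpace ℝ (Fin m)) (i : Fin m) : |y i| ≤ ‖y‖ := by
  rw [EuclideanSpace.norm_eq, ← Real.sqrt_sq_eq_abs]
  apply Real.sqrt_le_sqrt
  have := Finset.single_le_sum (f := fun j => ‖y j‖ ^ 2) (fun j _ => sq_nonneg _)
    (Finset.mem_univ i)
  simpa [Real.norm_eq_abs, sq_abs] using this

/-- for `0 ≤ k < n` and `p > 1` there is `C > 0` such that every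
`x ∈ W^{1,p}([0,1], ℝ^{2n})` with `x(0), x(1) ∈ ℝ^{n,k}` and `∫₀¹ x(t) dt ∈ J(V₀^{n,k})`
satisfies `‖x‖_{L^∞} ≤ C ‖ẋ‖_{L^p}`. -/
theorem stmt4 (n k : ℕ) (hk : k < n) (p : ℝ) (hp : 1 < p) :
    ∃ C > 0, ∀ x x' : ℝ → Esp n,
      (∀ t ∈ Icc (0:ℝ) 1, HasDerivAt x (x' t) t) →
      x 0 ∈ Rnk n k → x 1 ∈ Rnk n k →
      (∫ t in (0:ℝ)..1, x t) ∈ Jfun n '' V0 n k →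
      IntervalIntegrable (fun t => ‖x' t‖ ^ p) volume 0 1 →
      ∀ t ∈ Icc (0:ℝ) 1, ‖x t‖ ≤ C * (∫ s in (0:ℝ)..1, ‖x' s‖ ^ p) ^ (1 / p) := by

  refine ⟨Real.sqrt (2 * n) + 1, by positivity, ?_⟩
  intro x x' hderiv h0 h1 hmem hintp t ht
  have h01 : (0:ℝ) ≤ 1 := zero_le_one
  have hp0 : (0:ℝ) < p := lt_trans one_pos hp
  -- continuity of x
  have hxc : ContinuousOn x (Icc 0 1) := fun s hs =>
    (hderiv s hs).continuousAt.continuousWithinAt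
  have hxint : IntervalIntegrable x volume 0 1 := hxc.intervalIntegrable_of_Icc h01
  -- measurability of x'
  have hx'm : AEStronglyMeasurable x' (volume.restrict (Ioc (0:ℝ) 1)) := by
    refine ((stronglyMeasurable_deriv x).aestronglyMeasurable.restrict).congr ?_
    filter_upwards [ae_restrict_mem measurableSet_Ioc] with s hs
    exact (hderiv s (Ioc_subset_Icc_self hs)).deriv
  -- pointwise bound ‖x'‖ ≤ 1 + ‖x'‖^p
  have hble : ∀ s : ℝ, ‖x' s‖ ≤ 1 + ‖x' s‖ ^ p := by
    intro s
    rcases le_or_gt (‖x' s‖) 1 with h | h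
    · have : (0:ℝ) ≤ ‖x' s‖ ^ p := Real.rpow_nonneg (norm_nonneg _) p
      linarith
    · have h2 : ‖x' s‖ ^ (1:ℝ) ≤ ‖x' s‖ ^ p := Real.rpow_le_rpow_of_exponent_le h.le hp.le
      rw [Real.rpow_one] at h2
      linarith
  have hInt1 : IntervalIntegrable (fun s => ‖x' s‖) volume 0 1 := by
    have hc : IntervalIntegrable (fun s => 1 + ‖x' s‖ ^ p) volume 0 1 :=
      intervalIntegrable_const.add hintp
    refine hc.mono_fun ?_ ?_
    · rw [uIoc_of_le h01]; exact hx'm.norm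
    · refine Filter.Eventually.of_forall fun s => ?_
      have h2 : ‖1 + ‖x' s‖ ^ p‖ = 1 + ‖x' s‖ ^ p := by
        rw [Real.norm_eq_abs, abs_of_nonneg]
        positivity
      simpa [h2] using hble s
  have hx'int : IntervalIntegrable x' volume 0 1 := by
    rw [intervalIntegrable_iff_integrableOn_Ioc_of_le h01]
    exact ((intervalIntegrable_iff_integrableOn_Ioc_of_le h01).1 hInt1).mono' hx'm
      (Filter.Eventually.of_forall fun s => le_rfl)
  set A : ℝ := ∫ s in (0:ℝ)..1, ‖x' s‖ with hAdef
  have hA0 : 0 ≤ A := intervalIntegral.integral_nonneg h01 fun s _ => norm_nonneg _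
  -- componentwise derivative
  have hcomp : ∀ i : Fin (2*n), ∀ s ∈ Icc (0:ℝ) 1, HasDerivAt (fun u => x u i) (x' s i) s := by
    intro i s hs
    have := (EuclideanSpace.proj (𝕜 := ℝ) i).hasFDerivAt.comp_hasDerivAt s (hderiv s hs)
    exact this
  have hx'i : ∀ i : Fin (2*n), IntervalIntegrable (fun s => x' s i) volume 0 1 := by
    intro i
    refine hInt1.mono_fun ?_ ?_
    · rw [uIoc_of_le h01]
      exact (EuclideanSpace.proj (𝕜 := ℝ) i).continuous.comp_aestronglyMeasurable hx'm
    · refine Filter.Eventually.of_forall fun s => ?_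
      simpa [Real.norm_eq_abs] using coord_le (x' s) i
  -- key estimate |x b i - x a i| ≤ A for a ≤ b in [0,1]
  have key : ∀ i : Fin (2*n), ∀ a b : ℝ, a ∈ Icc (0:ℝ) 1 → b ∈ Icc (0:ℝ) 1 → a ≤ b →
      |x b i - x a i| ≤ A := by
    intro i a b ha hb hab
    have hsub : uIcc a b ⊆ Icc (0:ℝ) 1 := by
      rw [uIcc_of_le hab]; exact Icc_subset_Icc ha.1 hb.2
    have hii : IntervalIntegrable (fun s => x' s i) volume a b :=
      (hx'i i).mono_set (by
        rw [uIcc_of_le hab, uIcc_of_le h01]; exact Icc_subset_Icc ha.1 hb.2)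
    have hnn : IntervalIntegrable (fun s => ‖x' s‖) volume a b :=
      hInt1.mono_set (by
        rw [uIcc_of_le hab, uIcc_of_le h01]; exact Icc_subset_Icc ha.1 hb.2)
    have heq : (∫ s in a..b, x' s i) = x b i - x a i :=
      intervalIntegral.integral_eq_sub_of_hasDerivAt (fun u hu => hcomp i u (hsub hu)) hii
    rw [← heq]
    calc |∫ s in a..b, x' s i| ≤ ∫ s in a..b, |x' s i| :=
          intervalIntegral.abs_integral_le_integral_abs hab
      _ ≤ ∫ s in a..b, ‖x' s‖ :=
          intervalIntegral.integral_mono_on hab hii.abs hnn fun s _ => coord_le (x' s) i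
      _ ≤ A := intervalIntegral.integral_mono_interval ha.1 hab hb.2
          (Filter.Eventually.of_forall fun s => norm_nonneg _) hInt1
  have key2 : ∀ i : Fin (2*n), ∀ a b : ℝ, a ∈ Icc (0:ℝ) 1 → b ∈ Icc (0:ℝ) 1 →
      |x b i - x a i| ≤ A := by
    intro i a b ha hb
    rcases le_total a b with h | h
    · exact key i a b ha hb h
    · rw [abs_sub_comm]; exact key i b a hb ha h
  -- integral coordinates vanish for i < n + k
  have hIzero : ∀ i : Fin (2*n), (i : ℕ) < n + k → (∫ s in (0:ℝ)..1, x s i) = 0 := by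
    intro i hi
    obtain ⟨v, hv, hveq⟩ := hmem
    have hco : (∫ s in (0:ℝ)..1, x s i) = (∫ s in (0:ℝ)..1, x s) i := by
      simpa using (EuclideanSpace.proj (𝕜 := ℝ) i).intervalIntegral_comp_comm hxint
    rw [hco, ← hveq]
    show Jfun n v i = 0
    unfold Jfun
    rw [WithLp.ofLp_toLp]
    by_cases h : (i : ℕ) < n
    · rw [dif_pos h, hv ⟨(i:ℕ) + n, by omega⟩ (Or.inr (by simp)), neg_zero]
    · rw [dif_neg h]
      exact hv ⟨(i:ℕ) - n, by have := i.isLt; omega⟩ (Or.inl (by simp; omega))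
  -- coordinate bound
  have hcoordA : ∀ i : Fin (2*n), |x t i| ≤ A := by
    intro i
    by_cases hi : n + k ≤ (i : ℕ)
    · have h00 : x 0 i = 0 := h0 i hi
      have := key2 i 0 t (left_mem_Icc.2 h01) ht
      rwa [h00, sub_zero] at this
    · push_neg at hi
      have hz := hIzero i hi
      have hxii : IntervalIntegrable (fun s => x s i) volume 0 1 :=
        (((EuclideanSpace.proj (𝕜 := ℝ) i).continuous.comp_continuousOn hxc)).intervalIntegrable_of_Icc h01
      have heq : (∫ s in (0:ℝ)..1, (x t i - x s i)) = x t i := by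
        rw [intervalIntegral.integral_sub intervalIntegrable_const hxii, hz,
          intervalIntegral.integral_const]
        simp
      rw [← heq]
      calc |∫ s in (0:ℝ)..1, (x t i - x s i)| ≤ ∫ s in (0:ℝ)..1, |x t i - x s i| :=
            intervalIntegral.abs_integral_le_integral_abs h01
        _ ≤ ∫ _s in (0:ℝ)..1, A :=
            intervalIntegral.integral_mono_on h01 (intervalIntegrable_const.sub hxii).abs
              intervalIntegrable_const fun s hs => key2 i s t hs ht
        _ = A := by simp
  -- norm bound
  have hnorm : ‖x t‖ ≤ Real.sqrt (2 * n) * A := by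
    rw [EuclideanSpace.norm_eq]
    have hsum : (∑ i, ‖x t i‖ ^ 2) ≤ (2 * n) * A ^ 2 := by
      calc (∑ i, ‖x t i‖ ^ 2) ≤ ∑ _i : Fin (2*n), A ^ 2 := by
            refine Finset.sum_le_sum fun i _ => ?_
            rw [Real.norm_eq_abs]
            exact pow_le_pow_left₀ (abs_nonneg _) (hcoordA i) 2
        _ = (2 * n) * A ^ 2 := by
            rw [Finset.sum_const, Finset.card_univ, Fintype.card_fin, nsmul_eq_mul]
            push_cast; ring
    calc Real.sqrt (∑ i, ‖x t i‖ ^ 2) ≤ Real.sqrt ((2 * n) * A ^ 2) := Real.sqrt_le_sqrt hsum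
      _ = Real.sqrt (2 * n) * A := by
          rw [Real.sqrt_mul (by positivity), Real.sqrt_sq hA0]
  -- Jensen: A ≤ I^(1/p)
  set I : ℝ := ∫ s in (0:ℝ)..1, ‖x' s‖ ^ p with hIdef
  have hI0 : 0 ≤ I := intervalIntegral.integral_nonneg h01 fun s _ =>
    Real.rpow_nonneg (norm_nonneg _) p
  have hprob : IsProbabilityMeasure ((volume : Measure ℝ).restrict (Ioc 0 1)) := ⟨by simp⟩
  have hcont : ContinuousOn (fun y : ℝ => y ^ p) (Ici 0) := fun y _ =>
    (Real.continuousAt_rpow_const y p (Or.inr hp0.le)).continuousWithinAt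
  have hfi : Integrable (fun s => ‖x' s‖) ((volume : Measure ℝ).restrict (Ioc 0 1)) :=
    (intervalIntegrable_iff_integrableOn_Ioc_of_le h01).1 hInt1
  have hgi : Integrable ((fun y : ℝ => y ^ p) ∘ fun s => ‖x' s‖)
      ((volume : Measure ℝ).restrict (Ioc 0 1)) :=
    (intervalIntegrable_iff_integrableOn_Ioc_of_le h01).1 hintp
  have hjen := (convexOn_rpow hp.le).map_integral_le hcont isClosed_Ici
    (Filter.Eventually.of_forall fun s => norm_nonneg (x' s)) hfi hgi
  have hAI : A ^ p ≤ I := by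
    rw [hAdef, hIdef, intervalIntegral.integral_of_le h01, intervalIntegral.integral_of_le h01]
    exact hjen
  have hA_le : A ≤ I ^ (1 / p) := by
    have h3 : (A ^ p) ^ p⁻¹ = A := Real.rpow_rpow_inv hA0 (ne_of_gt hp0)
    calc A = (A ^ p) ^ p⁻¹ := h3.symm
      _ ≤ I ^ p⁻¹ := Real.rpow_le_rpow (Real.rpow_nonneg hA0 p) hAI (by positivity)
      _ = I ^ (1 / p) := by rw [one_div]
  have hB0 : 0 ≤ I ^ (1 / p) := Real.rpow_nonneg hI0 _
  calc ‖x t‖ ≤ Real.sqrt (2 * n) * A := hnorm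
    _ ≤ Real.sqrt (2 * n) * (I ^ (1 / p)) :=
        mul_le_mul_of_nonneg_left hA_le (Real.sqrt_nonneg _)
    _ ≤ (Real.sqrt (2 * n) + 1) * I ^ (1 / p) := by nlinarith [Real.sqrt_nonneg (2 * (n:ℝ))]
end
end

section
/- Consider the ellipsoid E = {(q,p) ∈ ℝ^{2n} : Σⱼ (qⱼ² + pⱼ²)/rⱼ² < 1} with r₁,…,rₙ > 0, the quadratic form H(z) = Σⱼ (qⱼ² + pⱼ²)/rⱼ², and the linear flow φᵗ(z) = exp(t J S) z with S = Diag(2/r₁²,…,2/rₙ², 2/r₁²,…,2/rₙ²). For z = (q₁,…,qₙ,p₁,…,p_k,0,…,0) ∈ ∂E ∩ ℝ^{n,k} (0 ≤ k < n) and T > 0, the conditions φᵀ(z) ∈ ℝ^{n,k} and φᵀ(z) − z ∈ V₀^{n,k} hold with z having some nonzero coordinate q_j (k+1 ≤ j ≤ n) only if T = (mπ/2)·r_j² for some positive integer m; and if instead (q_{k+1},…,qₙ) = 0 and (q_j,p_j) ≠ 0 for some 1 ≤ j ≤ k, then T = mπ·r_j² for some positive integer m. -/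
open MeasureTheory Set Filter
open scoped Pointwise

noncomputable section

/-- Index of the `q_j` coordinate. -/
def qIdx (n : ℕ) (j : Fin n) : Fin (2 * n) := ⟨(j : ℕ), by have := j.isLt; omega⟩

/-- Index of the `p_j` coordinate. -/
def pIdx (n : ℕ) (j : Fin n) : Fin (2 * n) := ⟨(j : ℕ) + n, by have := j.isLt; omega⟩

/-- The linear flow `exp(tJS)` with `S = Diag(2/r₁²,…,2/rₙ²,2/r₁²,…,2/rₙ²)`: it rotates the
`(q_j, p_j)`-plane by the angle `2t/r_j²`. -/
def rotFlow (n : ℕ) (r : Fin n → ℝ) (t : ℝ) (z : Esp n) : Esp n := WithLp.toLp 2 fun (i : Fin (2 * n)) =>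
  if h : (i : ℕ) < n then
    Real.cos (2 * t / (r ⟨(i : ℕ), h⟩) ^ 2) * z i -
      Real.sin (2 * t / (r ⟨(i : ℕ), h⟩) ^ 2) * z ⟨(i : ℕ) + n, by omega⟩
  else
    Real.sin (2 * t / (r ⟨(i : ℕ) - n, by have := i.isLt; omega⟩) ^ 2) *
        z ⟨(i : ℕ) - n, by have := i.isLt; omega⟩ +
      Real.cos (2 * t / (r ⟨(i : ℕ) - n, by have := i.isLt; omega⟩) ^ 2) * z i

/-- for `z ∈ ∂E(r₁,…,rₙ) ∩ ℝ^{n,k}` and `T > 0` with `exp(TJS) z ∈ ℝ^{n,k}` and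
`exp(TJS) z - z ∈ V₀^{n,k}`: if some `q_j ≠ 0` with `j > k` then `T = (mπ/2) r_j²` for a
positive integer `m`; and if `(q_{k+1},…,qₙ) = 0` and `(q_j, p_j) ≠ 0` for some `j ≤ k` then
`T = mπ r_j²` for a positive integer `m`. -/
theorem stmt13 (n k : ℕ) (hk : k < n) (r : Fin n → ℝ) (hr : ∀ j, 0 < r j)
    (z : Esp n) (hz : z ∈ Rnk n k)
    (hbd : ∑ j : Fin n, ((z (qIdx n j)) ^ 2 + (z (pIdx n j)) ^ 2) / (r j) ^ 2 = 1)
    (T : ℝ) (hT : 0 < T)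
    (h1 : rotFlow n r T z ∈ Rnk n k)
    (h2 : rotFlow n r T z - z ∈ V0 n k) :
    (∀ j : Fin n, k ≤ (j : ℕ) → z (qIdx n j) ≠ 0 →
        ∃ m : ℕ, 0 < m ∧ T = (m : ℝ) * Real.pi / 2 * (r j) ^ 2) ∧
    ((∀ j : Fin n, k ≤ (j : ℕ) → z (qIdx n j) = 0) →
      ∀ j : Fin n, (j : ℕ) < k → (z (qIdx n j) ≠ 0 ∨ z (pIdx n j) ≠ 0) →
        ∃ m : ℕ, 0 < m ∧ T = (m : ℝ) * Real.pi * (r j) ^ 2) := by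
  -- coordinate formulas for the flow
  have hrot_q : ∀ j : Fin n, rotFlow n r T z (qIdx n j) =
      Real.cos (2 * T / (r j) ^ 2) * z (qIdx n j) -
        Real.sin (2 * T / (r j) ^ 2) * z (pIdx n j) := by
    intro j
    have hj : ((qIdx n j : Fin (2*n)) : ℕ) < n := j.isLt
    simp only [rotFlow, dif_pos hj]
    rfl
  have hrot_p : ∀ j : Fin n, rotFlow n r T z (pIdx n j) =
      Real.sin (2 * T / (r j) ^ 2) * z (qIdx n j) +
        Real.cos (2 * T / (r j) ^ 2) * z (pIdx n j) := by
    intro j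
    simp only [rotFlow, pIdx, qIdx]
    rw [dif_neg (by simp only [Fin.val_mk]; omega :
      ¬ ((⟨(j : ℕ) + n, by have := j.isLt; omega⟩ : Fin (2*n)) : ℕ) < n)]
    have hfin : (⟨(j : ℕ) + n - n, by have := j.isLt; omega⟩ : Fin (2*n)) =
        ⟨(j : ℕ), by have := j.isLt; omega⟩ := Fin.ext (by simp)
    rw [hfin]
    have hfin2 : (⟨(j : ℕ) + n - n, by have := j.isLt; omega⟩ : Fin n) = j :=
      Fin.ext (by simp)
    rw [hfin2]
  have hθpos : ∀ j : Fin n, 0 < 2 * T / (r j) ^ 2 := fun j =>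
    div_pos (by linarith) (pow_pos (hr j) 2)
  constructor
  · intro j hjk hq
    have hp0 : z (pIdx n j) = 0 := hz (pIdx n j) (by simp [pIdx]; omega)
    have hflow0 : rotFlow n r T z (pIdx n j) = 0 :=
      h1 (pIdx n j) (by simp [pIdx]; omega)
    rw [hrot_p, hp0, mul_zero, add_zero] at hflow0
    have hsin : Real.sin (2 * T / (r j) ^ 2) = 0 :=
      (mul_eq_zero.1 hflow0).resolve_right hq
    obtain ⟨m, hm⟩ := Real.sin_eq_zero_iff.1 hsin
    have hmpos : 0 < m := by
      by_contra hcon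
      push_neg at hcon
      have : (m : ℝ) * Real.pi ≤ 0 :=
        mul_nonpos_of_nonpos_of_nonneg (by exact_mod_cast hcon) Real.pi_pos.le
      linarith [hθpos j]
    refine ⟨m.toNat, by omega, ?_⟩
    have hmr : ((m.toNat : ℕ) : ℝ) = (m : ℝ) := by
      exact_mod_cast congrArg Int.cast (Int.toNat_of_nonneg hmpos.le)
    have hr2 : (r j) ^ 2 ≠ 0 := (pow_pos (hr j) 2).ne'
    field_simp at hm ⊢
    rw [hmr]
    rw [eq_div_iff hr2] at hm
    linarith [hm]
  · intro hq0 j hjk hnz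
    have e1 : rotFlow n r T z (qIdx n j) - z (qIdx n j) = 0 := by
      have := h2 (qIdx n j) (Or.inl (by simpa [qIdx] using hjk))
      simpa using this
    have e2 : rotFlow n r T z (pIdx n j) - z (pIdx n j) = 0 := by
      have := h2 (pIdx n j) (Or.inr (by simp [pIdx]))
      simpa using this
    rw [hrot_q] at e1
    rw [hrot_p] at e2
    set c := Real.cos (2 * T / (r j) ^ 2) with hc
    set s := Real.sin (2 * T / (r j) ^ 2) with hs
    set q := z (qIdx n j) with hqd
    set p := z (pIdx n j) with hpd
    -- e1 : (c-1) q - s p = 0, e2 : s q + (c-1) p = 0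
    have key : (c - 1) ^ 2 + s ^ 2 = 0 := by
      rcases hnz with hq | hp
      · have hzq : ((c - 1) ^ 2 + s ^ 2) * q = 0 := by
          linear_combination (c - 1) * e1 + s * e2
        exact (mul_eq_zero.1 hzq).resolve_right hq
      · have hzp : ((c - 1) ^ 2 + s ^ 2) * p = 0 := by
          linear_combination (-s) * e1 + (c - 1) * e2
        exact (mul_eq_zero.1 hzp).resolve_right hp
    have hsq : (c - 1) ^ 2 = 0 := by nlinarith [sq_nonneg s, sq_nonneg (c - 1)]
    have hcos1 : c = 1 := by
      have := pow_eq_zero_iff (n := 2) (by norm_num) |>.1 hsq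
      linarith
    obtain ⟨m, hm⟩ := (Real.cos_eq_one_iff _).1 hcos1
    have hmpos : 0 < m := by
      by_contra hcon
      push_neg at hcon
      have : (m : ℝ) * (2 * Real.pi) ≤ 0 :=
        mul_nonpos_of_nonpos_of_nonneg (by exact_mod_cast hcon) (by linarith [Real.pi_pos])
      linarith [hθpos j]
    refine ⟨m.toNat, by omega, ?_⟩
    have hmr : ((m.toNat : ℕ) : ℝ) = (m : ℝ) := by
      exact_mod_cast congrArg Int.cast (Int.toNat_of_nonneg hmpos.le)
    have hr2 : (r j) ^ 2 ≠ 0 := (pow_pos (hr j) 2).ne'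
    field_simp at hm ⊢
    rw [hmr]
    rw [eq_div_iff hr2] at hm
    linarith [hm]
end
end

section
/- Consider the circle flow on ℝ², ż = 2J(z − a·e₂) where a ∈ (−1,1), e₂ = (0,1), and z moves on the unit circle centered at (0,a). Suppose z(0) = (q, 0) and z(T) ∈ ℝ × {0} with T > 0 minimal, where q² + a² = 1 and q = sign(−a)·√(1−a²) (with q = √(1−a²) when a ≤ 0). Then the symplectic action A(z) = (1/2)∫₀ᵀ ⟨−J ż, z⟩ dt equals arcsin(r) − r√(1−r²) where r = √(1−a²). -/
open MeasureTheory Set Filter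
open scoped Pointwise

noncomputable section

set_option maxHeartbeats 2000000 in
/-- for the circle flow `ż = 2J(z - a·e₂)` on `ℝ²` with `a ∈ (-1,1)`, starting at
`z(0) = (q, 0)` with `q² + a² = 1`, `q = √(1-a²)` if `a ≤ 0` and `q = -√(1-a²)` if `a > 0`,
and `T > 0` the minimal return time to `ℝ × {0}`, the symplectic action
`(1/2)∫₀ᵀ ⟨-J ż, z⟩` equals `arcsin r - r √(1-r²)` with `r = √(1-a²)`. -/
theorem stmt15 (a q T : ℝ) (ha : a ∈ Ioo (-1 : ℝ) 1)
    (hq1 : a ≤ 0 → q = Real.sqrt (1 - a ^ 2))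
    (hq2 : 0 < a → q = -Real.sqrt (1 - a ^ 2))
    (hT : 0 < T)
    (z z' : ℝ → Esp 1) (c : Esp 1)
    (hc0 : c ⟨0, by omega⟩ = 0) (hc1 : c ⟨1, by omega⟩ = a)
    (hderiv : ∀ t, HasDerivAt z (z' t) t)
    (hODE : ∀ t, z' t = (2 : ℝ) • Jfun 1 (z t - c))
    (hcirc : ∀ t ∈ Icc (0:ℝ) T, ‖z t - c‖ = 1)
    (hz0q : z 0 ⟨0, by omega⟩ = q) (hz0p : z 0 ⟨1, by omega⟩ = 0)
    (hend : z T ⟨1, by omega⟩ = 0)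
    (hmin : ∀ t ∈ Ioo (0:ℝ) T, z t ⟨1, by omega⟩ ≠ 0) :
    (1 / 2) * ∫ t in (0:ℝ)..T, (inner ℝ (-Jfun 1 (z' t)) (z t) : ℝ) =
      Real.arcsin (Real.sqrt (1 - a ^ 2)) -
        Real.sqrt (1 - a ^ 2) * Real.sqrt (1 - (Real.sqrt (1 - a ^ 2)) ^ 2) := by
  obtain ⟨ha1, ha2⟩ := ha
  set r := Real.sqrt (1 - a ^ 2) with hrdef
  clear_value r
  have ha2' : a ^ 2 < 1 := by nlinarith
  have hr2 : r ^ 2 = 1 - a ^ 2 := by rw [hrdef]; exact Real.sq_sqrt (by nlinarith)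
  have hrpos : 0 < r := by rw [hrdef]; exact Real.sqrt_pos.mpr (by nlinarith)
  have hq2' : q ^ 2 = 1 - a ^ 2 := by
    rcases le_or_gt a 0 with h | h
    · rw [hq1 h]; exact hr2
    · rw [hq2 h]; rw [neg_pow]; simpa using hr2
  have hc0' : c (0 : Fin (2*1)) = 0 := hc0
  have hc1' : c (1 : Fin (2*1)) = a := hc1
  have hz0q' : z 0 (0 : Fin (2*1)) = q := hz0q
  have hz0p' : z 0 (1 : Fin (2*1)) = 0 := hz0p
  -- componentwise derivatives
  have hproj : ∀ (i : Fin (2*1)) t, HasDerivAt (fun s => z s i) (z' t i) t := by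
    intro i t
    have h := (EuclideanSpace.proj i).hasFDerivAt.comp_hasDerivAt t (hderiv t)
    exact h
  have hz'0 : ∀ t, z' t (0 : Fin (2*1)) = -(2 * (z t (1 : Fin (2*1)) - a)) := by
    intro t
    rw [hODE t]
    simp [Jfun, hc1']
    ring
  have hz'1 : ∀ t, z' t (1 : Fin (2*1)) = 2 * z t (0 : Fin (2*1)) := by
    intro t
    rw [hODE t]
    simp [Jfun, hc0']
  have hx' : ∀ t, HasDerivAt (fun s => z s (0 : Fin (2*1)))
      (-(2 * (z t (1 : Fin (2*1)) - a))) t := by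
    intro t
    have h := hproj 0 t
    rwa [hz'0 t] at h
  have hy' : ∀ t, HasDerivAt (fun s => z s (1 : Fin (2*1))) (2 * z t (0 : Fin (2*1))) t := by
    intro t
    have h := hproj 1 t
    rwa [hz'1 t] at h
  -- derivative helpers for cos(2t), sin(2t)
  have hc2 : ∀ u : ℝ, HasDerivAt (fun s : ℝ => Real.cos (2*s)) (-(2 * Real.sin (2*u))) u := by
    intro u
    have h := (Real.hasDerivAt_cos (2*u)).comp u ((hasDerivAt_id u).const_mul 2)
    simp only [Function.comp_def] at h
    exact h.congr_deriv (by ring)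
  have hs2 : ∀ u : ℝ, HasDerivAt (fun s : ℝ => Real.sin (2*s)) (2 * Real.cos (2*u)) u := by
    intro u
    have h := (Real.hasDerivAt_sin (2*u)).comp u ((hasDerivAt_id u).const_mul 2)
    simp only [Function.comp_def] at h
    exact h.congr_deriv (by ring)
  -- explicit solution via energy argument
  have key : ∀ t, z t (0 : Fin (2*1)) = q * Real.cos (2*t) + a * Real.sin (2*t) ∧
      z t (1 : Fin (2*1)) = a + q * Real.sin (2*t) - a * Real.cos (2*t) := by
    have hf' : ∀ t, HasDerivAt
        (fun s => z s (0 : Fin (2*1)) - (q * Real.cos (2*s) + a * Real.sin (2*s)))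
        (-(2 * (z t (1 : Fin (2*1)) - (a + q * Real.sin (2*t) - a * Real.cos (2*t))))) t := by
      intro t
      have h := (hx' t).sub (((hc2 t).const_mul q).add ((hs2 t).const_mul a))
      exact h.congr_deriv (by ring)
    have hg' : ∀ t, HasDerivAt
        (fun s => z s (1 : Fin (2*1)) - (a + q * Real.sin (2*s) - a * Real.cos (2*s)))
        (2 * (z t (0 : Fin (2*1)) - (q * Real.cos (2*t) + a * Real.sin (2*t)))) t := by
      intro t
      have h := (hy' t).sub (((hasDerivAt_const t a).add ((hs2 t).const_mul q)).sub
        ((hc2 t).const_mul a))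
      exact h.congr_deriv (by ring)
    have hE : ∀ t, HasDerivAt
        (fun s => (z s (0 : Fin (2*1)) - (q * Real.cos (2*s) + a * Real.sin (2*s))) ^ 2
          + (z s (1 : Fin (2*1)) - (a + q * Real.sin (2*s) - a * Real.cos (2*s))) ^ 2) 0 t := by
      intro t
      have h := ((hf' t).pow 2).add ((hg' t).pow 2)
      exact h.congr_deriv (by ring)
    have hcst : ∀ t,
        (z t (0 : Fin (2*1)) - (q * Real.cos (2*t) + a * Real.sin (2*t))) ^ 2
          + (z t (1 : Fin (2*1)) - (a + q * Real.sin (2*t) - a * Real.cos (2*t))) ^ 2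
        = (z 0 (0 : Fin (2*1)) - (q * Real.cos (2*0) + a * Real.sin (2*0))) ^ 2
          + (z 0 (1 : Fin (2*1)) - (a + q * Real.sin (2*0) - a * Real.cos (2*0))) ^ 2 := by
      intro t
      exact is_const_of_deriv_eq_zero (fun s => (hE s).differentiableAt)
        (fun s => (hE s).deriv) t 0
    have hzero : (z 0 (0 : Fin (2*1)) - (q * Real.cos (2*0) + a * Real.sin (2*0))) ^ 2
        + (z 0 (1 : Fin (2*1)) - (a + q * Real.sin (2*0) - a * Real.cos (2*0))) ^ 2 = 0 := by
      rw [hz0q', hz0p']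
      norm_num
    intro t
    have h := (hcst t).trans hzero
    have hA := sq_nonneg (z t (0 : Fin (2*1)) - (q * Real.cos (2*t) + a * Real.sin (2*t)))
    have hB := sq_nonneg (z t (1 : Fin (2*1)) - (a + q * Real.sin (2*t) - a * Real.cos (2*t)))
    have h1 : z t (0 : Fin (2*1)) - (q * Real.cos (2*t) + a * Real.sin (2*t)) = 0 := by
      have h2 : (z t (0 : Fin (2*1)) - (q * Real.cos (2*t) + a * Real.sin (2*t))) ^ 2 = 0 := by
        linarith
      exact (pow_eq_zero_iff (by norm_num : (2:ℕ) ≠ 0)).mp h2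
    have h2 : z t (1 : Fin (2*1)) - (a + q * Real.sin (2*t) - a * Real.cos (2*t)) = 0 := by
      have h3 : (z t (1 : Fin (2*1)) - (a + q * Real.sin (2*t) - a * Real.cos (2*t))) ^ 2 = 0 := by
        linarith
      exact (pow_eq_zero_iff (by norm_num : (2:ℕ) ≠ 0)).mp h3
    exact ⟨by linarith, by linarith⟩
  -- setup for the return time
  have hb1 : |a| < 1 := abs_lt.mpr ⟨ha1, ha2⟩
  have hb0 : (0:ℝ) ≤ |a| := abs_nonneg a
  have hα0 : 0 ≤ Real.arcsin |a| := Real.arcsin_nonneg.mpr hb0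
  have hα2 : Real.arcsin |a| < Real.pi / 2 := Real.arcsin_lt_pi_div_two.mpr hb1
  have hπ := Real.pi_pos
  obtain ⟨T0, hT0def⟩ : ∃ x : ℝ, x = Real.pi / 2 - Real.arcsin |a| := ⟨_, rfl⟩
  have hT0pos : 0 < T0 := by rw [hT0def]; linarith
  have hT0le : T0 ≤ Real.pi / 2 := by rw [hT0def]; linarith
  have hsinT0 : Real.sin T0 = r := by
    rw [hT0def, Real.sin_pi_div_two_sub, Real.cos_arcsin,
      show (1:ℝ) - |a| ^ 2 = 1 - a ^ 2 by rw [sq_abs]]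
    exact hrdef.symm
  have hcosT0 : Real.cos T0 = |a| := by
    rw [hT0def, Real.cos_pi_div_two_sub, Real.sin_arcsin (by linarith) hb1.le]
  have harcr : Real.arcsin r = T0 := by
    rw [← hsinT0, Real.arcsin_sin (by linarith) hT0le]
  -- factorization of the second coordinate
  have hyfac : ∀ t, z t (1 : Fin (2*1)) =
      2 * Real.sin t * (q * Real.cos t + a * Real.sin t) := by
    intro t
    rw [(key t).2, Real.sin_two_mul, Real.cos_two_mul]
    linear_combination (-2*a) * Real.sin_sq_add_cos_sq t
  -- sign of the second coordinate on (0, T0)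
  have hsign : ∀ t ∈ Ioo (0:ℝ) T0, z t (1 : Fin (2*1)) ≠ 0 := by
    intro t ht
    obtain ⟨ht0, htT0⟩ := ht
    have hst : 0 < Real.sin t := Real.sin_pos_of_pos_of_lt_pi ht0 (by linarith)
    have hct : |a| < Real.cos t := by
      have h := Real.strictAntiOn_cos ⟨ht0.le, by linarith⟩ ⟨hT0pos.le, by linarith⟩ htT0
      rwa [hcosT0] at h
    have hst2 : Real.sin t < r := by
      have h := Real.strictMonoOn_sin ⟨by linarith, by linarith⟩ ⟨by linarith, by linarith⟩ htT0
      rwa [hsinT0] at h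
    rw [hyfac t]
    rcases le_or_gt a 0 with h | h
    · have hqr : q = r := hq1 h
      have hab : a = -|a| := by rw [abs_of_nonpos h]; ring
      have hE : 0 < q * Real.cos t + a * Real.sin t := by
        rw [hqr, hab]
        have h1 := mul_pos hrpos (sub_pos.mpr hct)
        have h2 := mul_le_mul_of_nonneg_left hst2.le hb0
        nlinarith [h1, h2]
      exact ne_of_gt (mul_pos (by linarith) hE)
    · have hqr : q = -r := hq2 h
      have hab : |a| = a := abs_of_pos h
      have hE : q * Real.cos t + a * Real.sin t < 0 := by
        rw [hqr, ← hab]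
        have h1 := mul_pos hrpos (sub_pos.mpr hct)
        have h2 := mul_le_mul_of_nonneg_left hst2.le hb0
        nlinarith [h1, h2]
      exact ne_of_lt (mul_neg_of_pos_of_neg (by linarith) hE)
  -- the second coordinate vanishes at T0
  have hyT0 : z T0 (1 : Fin (2*1)) = 0 := by
    rw [hyfac T0, hsinT0, hcosT0]
    rcases le_or_gt a 0 with h | h
    · rw [hq1 h, abs_of_nonpos h]
      ring
    · rw [hq2 h, abs_of_pos h]
      ring
  -- identify T with T0
  have hTT0 : T = T0 := by
    rcases lt_trichotomy T T0 with h | h | h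
    · exact absurd hend (hsign T ⟨hT, h⟩)
    · exact h
    · exact absurd hyT0 (hmin T0 ⟨hT0pos, h⟩)
  -- the integrand is an explicit trigonometric function
  have hinteg : ∀ t, (inner ℝ (-Jfun 1 (z' t)) (z t) : ℝ) =
      2 - 2*a^2*Real.cos (2*t) + 2*a*q*Real.sin (2*t) := by
    intro t
    have hJ0 : (Jfun 1 (z' t)) (0 : Fin (2*1)) = -(z' t (1 : Fin (2*1))) := by simp [Jfun]
    have hJ1 : (Jfun 1 (z' t)) (1 : Fin (2*1)) = z' t (0 : Fin (2*1)) := by simp [Jfun]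
    have hexp : (inner ℝ (-Jfun 1 (z' t)) (z t) : ℝ) =
        z' t (1 : Fin (2*1)) * z t (0 : Fin (2*1))
          - z' t (0 : Fin (2*1)) * z t (1 : Fin (2*1)) := by
      simp [PiLp.inner_apply, Fin.sum_univ_two, hJ0, hJ1]
      ring
    rw [hexp, hz'0 t, hz'1 t, (key t).1, (key t).2]
    have hq'' : q ^ 2 + a ^ 2 = 1 := by linarith
    linear_combination (2*(q^2+a^2)) * Real.sin_sq_add_cos_sq (2*t) + 2 * hq''
  -- antiderivative
  have hF : ∀ t : ℝ, HasDerivAt (fun s => 2*s - a^2 * Real.sin (2*s) - a*q*Real.cos (2*s))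
      (2 - 2*a^2*Real.cos (2*t) + 2*a*q*Real.sin (2*t)) t := by
    intro t
    have h := (((hasDerivAt_id t).const_mul 2).sub ((hs2 t).const_mul (a^2))).sub
      ((hc2 t).const_mul (a*q))
    exact h.congr_deriv (by ring)
  have hicongr : (∫ t in (0:ℝ)..T, (inner ℝ (-Jfun 1 (z' t)) (z t) : ℝ)) =
      ∫ t in (0:ℝ)..T, (2 - 2*a^2*Real.cos (2*t) + 2*a*q*Real.sin (2*t)) := by
    apply intervalIntegral.integral_congr
    intro t _
    exact hinteg t
  have hival : (∫ t in (0:ℝ)..T, (2 - 2*a^2*Real.cos (2*t) + 2*a*q*Real.sin (2*t))) =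
      (2*T - a^2 * Real.sin (2*T) - a*q*Real.cos (2*T)) -
      (2*0 - a^2 * Real.sin (2*0) - a*q*Real.cos (2*0)) := by
    apply intervalIntegral.integral_eq_sub_of_hasDerivAt (fun t _ => hF t)
    apply Continuous.intervalIntegrable
    fun_prop
  rw [hicongr, hival, hTT0]
  have hsq : Real.sqrt (1 - r ^ 2) = |a| := by
    rw [show (1 : ℝ) - r ^ 2 = a ^ 2 by linarith, Real.sqrt_sq_eq_abs]
  rw [harcr, hsq, Real.sin_two_mul, Real.cos_two_mul, hsinT0, hcosT0]
  simp only [mul_zero, Real.sin_zero, Real.cos_zero]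
  rcases le_or_gt a 0 with h | h
  · rw [hq1 h, show |a| = -a from abs_of_nonpos h]
    ring
  · rw [hq2 h, show |a| = a from abs_of_pos h]
    ring
end
end

section
/- Let D_a = B^{2n}((0,…,0,a), 1) ⊂ ℝ^{2n} be the unit ball centered at (0,…,0,a) with a ∈ [0,1), and D_a⁻ = {x ∈ D_a : pₙ ≤ 0}. With r = √(1−a²) and θ = arcsin(r), the volume of D_a⁻ equals (π^{n−1}/n!)·(θ − cos θ · Σ_{j=0}^{n−1} ((2n−2j−2)!!/(2n−2j−1)!!)·sin^{2n−2j−1}θ). -/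
open MeasureTheory Set Filter
open scoped Pointwise

noncomputable section

lemma my_df_odd_succ (k : ℕ) :
    Nat.doubleFactorial (2 * k + 1) = (2 * k + 1) * Nat.doubleFactorial (2 * k - 1) := by
  cases k with
  | zero => rfl
  | succ k =>
    have h1 : 2 * (k + 1) + 1 = (2 * k + 1) + 2 := by omega
    have h2 : 2 * (k + 1) - 1 = 2 * k + 1 := by omega
    rw [h1, h2, Nat.doubleFactorial_add_two]

lemma my_sinPow (k : ℕ) (θ : ℝ) :
    ∫ x in (0:ℝ)..θ, Real.sin x ^ (2 * k) =
      ((Nat.doubleFactorial (2 * k - 1) : ℝ) / (Nat.doubleFactorial (2 * k))) *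
        (θ - Real.cos θ * ∑ j ∈ Finset.range k,
          ((Nat.doubleFactorial (2 * j) : ℝ) / (Nat.doubleFactorial (2 * j + 1))) *
            Real.sin θ ^ (2 * j + 1)) := by
  induction k with
  | zero => simp [Nat.doubleFactorial]
  | succ k ih =>
    have h2k : 2 * (k + 1) = 2 * k + 2 := by omega
    rw [h2k, integral_sin_pow, ih, Finset.sum_range_succ]
    have hA : (0:ℝ) < (Nat.doubleFactorial (2 * k - 1) : ℝ) := by
      exact_mod_cast Nat.doubleFactorial_pos _
    have hB : (0:ℝ) < (Nat.doubleFactorial (2 * k) : ℝ) := by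
      exact_mod_cast Nat.doubleFactorial_pos _
    have e1 : 2 * k + 2 - 1 = 2 * k + 1 := by omega
    have hdf2 : (Nat.doubleFactorial (2 * k + 2) : ℝ)
        = (2 * (k:ℝ) + 2) * Nat.doubleFactorial (2 * k) := by
      rw [Nat.doubleFactorial_add_two]; push_cast; ring
    have hdf3 : (Nat.doubleFactorial (2 * k + 1) : ℝ)
        = (2 * (k:ℝ) + 1) * Nat.doubleFactorial (2 * k - 1) := by
      rw [my_df_odd_succ]; push_cast; ring
    rw [e1, hdf2, hdf3]
    simp only [Real.sin_zero, Real.cos_zero]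
    push_cast
    field_simp
    ring

lemma my_gamma (m : ℕ) : Real.Gamma ((m:ℝ) + 1 + 1/2)
    = (Nat.doubleFactorial (2*m+1) : ℝ) * Real.sqrt Real.pi / 2 ^ (m+1) := by
  induction m with
  | zero =>
    have : ((0:ℕ):ℝ) + 1 + 1/2 = 1/2 + 1 := by norm_num
    rw [this, Real.Gamma_add_one (by norm_num), Real.Gamma_one_half_eq]
    norm_num [Nat.doubleFactorial]
    ring
  | succ m ih =>
    have h : ((m+1:ℕ):ℝ) + 1 + 1/2 = ((m:ℝ) + 1 + 1/2) + 1 := by push_cast; ring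
    have hne : (m:ℝ) + 1 + 1/2 ≠ 0 := by positivity
    rw [h, Real.Gamma_add_one hne, ih]
    have hdf : (Nat.doubleFactorial (2*(m+1)+1) : ℝ)
        = (2*(m:ℝ)+3) * Nat.doubleFactorial (2*m+1) := by
      have : 2*(m+1)+1 = (2*m+1)+2 := by omega
      rw [this, Nat.doubleFactorial_add_two]; push_cast; ring
    rw [hdf]
    ring

lemma my_const (m : ℕ) :
    Real.sqrt Real.pi ^ (2*m+1) / Real.Gamma ((2*m+1 : ℕ) / 2 + 1)
      * ((Nat.doubleFactorial (2*(m+1)-1) : ℝ) / (Nat.doubleFactorial (2*(m+1))))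
    = Real.pi ^ m / (Nat.factorial (m+1)) := by
  have h1 : ((2*m+1 : ℕ) : ℝ) / 2 + 1 = (m:ℝ) + 1 + 1/2 := by push_cast; ring
  rw [h1, my_gamma]
  have e1 : 2*(m+1) - 1 = 2*m+1 := by omega
  have e2 : (Nat.doubleFactorial (2*(m+1)) : ℝ) = 2^(m+1) * Nat.factorial (m+1) := by
    exact_mod_cast congrArg (Nat.cast (R := ℝ)) (Nat.doubleFactorial_two_mul (m+1))
  rw [e1, e2]
  have hsq : Real.sqrt Real.pi ^ (2*m+1) = Real.pi ^ m * Real.sqrt Real.pi := by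
    rw [pow_succ, pow_mul, Real.sq_sqrt Real.pi_pos.le]
  rw [hsq]
  have hdf : (0:ℝ) < (Nat.doubleFactorial (2*m+1) : ℝ) := by
    exact_mod_cast Nat.doubleFactorial_pos _
  have hsp : (0:ℝ) < Real.sqrt Real.pi := Real.sqrt_pos.mpr Real.pi_pos
  have hfac : (0:ℝ) < (Nat.factorial (m+1) : ℝ) := by exact_mod_cast Nat.factorial_pos _
  field_simp

lemma my_ballvol (M : ℕ) (hM : 1 ≤ M) (R : ℝ) :
    volume {y : Fin M → ℝ | ∑ j, (y j)^2 < R}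
      = ENNReal.ofReal (Real.sqrt R ^ M) *
        ENNReal.ofReal (Real.sqrt Real.pi ^ M / Real.Gamma (M/2+1)) := by
  haveI : Nonempty (Fin M) := ⟨⟨0, hM⟩⟩
  have hmeas : MeasurableSet {y : Fin M → ℝ | ∑ j, (y j)^2 < R} := by
    apply measurableSet_lt _ measurable_const
    exact Finset.measurable_sum _ (fun j _ => (measurable_pi_apply j).pow_const 2)
  have hpre := (EuclideanSpace.volume_preserving_symm_measurableEquiv_toLp (Fin M)).measure_preimage
      (s := {y : Fin M → ℝ | ∑ j, (y j)^2 < R}) hmeas.nullMeasurableSet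
  rw [← hpre]
  have hb : (MeasurableEquiv.toLp 2 (Fin M → ℝ)).symm ⁻¹' {y : Fin M → ℝ | ∑ j, (y j)^2 < R}
      = Metric.ball (0 : EuclideanSpace ℝ (Fin M)) (Real.sqrt R) := by
    ext y
    simp only [mem_preimage, mem_setOf_eq, Metric.mem_ball, dist_zero_right,
      EuclideanSpace.norm_eq, Real.norm_eq_abs, sq_abs]
    rw [← Real.sqrt_lt_sqrt_iff (by positivity)]
    rfl
  rw [hb, EuclideanSpace.volume_ball, Fintype.card_fin,
    ENNReal.ofReal_pow (Real.sqrt_nonneg R)]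

lemma my_phi (M : ℕ) (x : EuclideanSpace ℝ (Fin (M+1))) :
    (MeasurableEquiv.piFinSuccAbove (fun _ : Fin (M+1) => ℝ) (Fin.last M))
      ((MeasurableEquiv.toLp 2 (Fin (M+1) → ℝ)).symm x)
    = (x (Fin.last M), fun j => x (Fin.castSucc j)) := by
  simp only [MeasurableEquiv.piFinSuccAbove, Fin.insertNthEquiv_last, MeasurableEquiv.coe_mk,
    Fin.snocEquiv_symm_apply, Prod.mk.injEq]
  exact ⟨rfl, funext fun j => rfl⟩

lemma my_key (M : ℕ) (hM : 1 ≤ M) (a : ℝ) (ha1 : a < 1)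
    (c : EuclideanSpace ℝ (Fin (M+1))) (hc : ∀ i : Fin (M+1), c i = if (i:ℕ) = M then a else 0) :
    volume {x : EuclideanSpace ℝ (Fin (M+1)) | dist x c < 1 ∧ x (Fin.last M) ≤ 0}
      = ENNReal.ofReal (Real.sqrt Real.pi ^ M / Real.Gamma (M/2+1)) *
        ENNReal.ofReal (∫ t in (a-1)..0, Real.sqrt (1-(t-a)^2) ^ M) := by
  set T : Set (ℝ × (Fin M → ℝ)) :=
    {p | p.1 ≤ 0 ∧ (p.1 - a)^2 + ∑ j, (p.2 j)^2 < 1} with hTdef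
  have hT : MeasurableSet T :=
    MeasurableSet.inter (measurableSet_le measurable_fst measurable_const)
      (measurableSet_lt (Measurable.add ((measurable_fst.sub measurable_const).pow_const 2)
        (Finset.measurable_sum _
          (fun j _ => ((measurable_pi_apply j).comp measurable_snd).pow_const 2)))
        measurable_const)
  have mp := (MeasureTheory.volume_preserving_piFinSuccAbove
      (fun _ : Fin (M+1) => ℝ) (Fin.last M)).comp
      (EuclideanSpace.volume_preserving_symm_measurableEquiv_toLp (Fin (M+1)))
  have hpre : (⇑(MeasurableEquiv.piFinSuccAbove (fun _ : Fin (M+1) => ℝ) (Fin.last M)) ∘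
      ⇑(MeasurableEquiv.toLp 2 (Fin (M+1) → ℝ)).symm) ⁻¹' T
      = {x : EuclideanSpace ℝ (Fin (M+1)) | dist x c < 1 ∧ x (Fin.last M) ≤ 0} := by
    ext x
    have hsum : ∑ i, dist (x i) (c i)^2
        = (x (Fin.last M) - a)^2 + ∑ j : Fin M, (x (Fin.castSucc j))^2 := by
      rw [Fin.sum_univ_castSucc (f := fun i => dist (x i) (c i)^2), add_comm]
      congr 1
      · rw [hc]
        simp [Fin.last, Real.dist_eq, sq_abs]
      · apply Finset.sum_congr rfl
        intro j _
        rw [hc]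
        have hne : ((j : ℕ)) ≠ M := Nat.ne_of_lt j.isLt
        simp [hne, Real.dist_eq, sq_abs]
    simp only [mem_preimage, Function.comp_apply, my_phi, hTdef, mem_setOf_eq]
    rw [EuclideanSpace.dist_eq, Real.sqrt_lt' one_pos, one_pow, hsum]
    tauto
  rw [← hpre, mp.measure_preimage hT.nullMeasurableSet]
  rw [Measure.volume_eq_prod, Measure.prod_apply hT]
  have hslice : ∀ t : ℝ, (volume (Prod.mk t ⁻¹' T))
      = (Iic (0:ℝ)).indicator (fun t => ENNReal.ofReal (Real.sqrt (1-(t-a)^2) ^ M) *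
          ENNReal.ofReal (Real.sqrt Real.pi ^ M / Real.Gamma (M/2+1))) t := by
    intro t
    by_cases ht : t ≤ 0
    · have : Prod.mk t ⁻¹' T = {y : Fin M → ℝ | ∑ j, (y j)^2 < 1 - (t-a)^2} := by
        ext y
        simp only [mem_preimage, hTdef, mem_setOf_eq, ht, true_and]
        constructor <;> intro h <;> linarith
      rw [this, my_ballvol M hM, indicator_of_mem (mem_Iic.mpr ht)]
    · have : Prod.mk t ⁻¹' T = ∅ := by
        ext y
        simp only [mem_preimage, hTdef, mem_setOf_eq, mem_empty_iff_false, iff_false]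
        tauto
      rw [this, measure_empty, indicator_of_notMem (by simpa using ht)]
  simp only [hslice]
  rw [lintegral_indicator measurableSet_Iic]
  have hgc : Continuous fun t : ℝ => Real.sqrt (1-(t-a)^2) ^ M :=
    ((continuous_const.sub ((continuous_id.sub continuous_const).pow 2)).sqrt).pow M
  rw [lintegral_mul_const' _ _ ENNReal.ofReal_ne_top]
  rw [mul_comm]
  congr 1
  have hsplit : Iic (0:ℝ) = Iic (a-1) ∪ Ioc (a-1) 0 := (Iic_union_Ioc_eq_Iic (by linarith)).symm
  rw [hsplit, lintegral_union measurableSet_Ioc (Iic_disjoint_Ioc le_rfl)]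
  have hzero : ∫⁻ t in Iic (a-1), ENNReal.ofReal (Real.sqrt (1-(t-a)^2) ^ M) = 0 := by
    rw [setLIntegral_congr_fun measurableSet_Iic
      (fun t (ht : t ∈ Iic (a-1)) => ?_), lintegral_zero]
    have h1 : 1 - (t-a)^2 ≤ 0 := by
      have := mem_Iic.mp ht
      nlinarith
    rw [Real.sqrt_eq_zero_of_nonpos h1, zero_pow (by omega), ENNReal.ofReal_zero]
  rw [hzero, zero_add]
  rw [← ofReal_integral_eq_lintegral_ofReal (hgc.integrableOn_Ioc)
    (Filter.Eventually.of_forall (fun t => by positivity))]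
  rw [intervalIntegral.integral_of_le (by linarith)]


/-- with `D_a = B^{2n}((0,…,0,a), 1)`, `a ∈ [0,1)`, and
`D_a⁻ = {x ∈ D_a : pₙ ≤ 0}`, `r = √(1-a²)`, `θ = arcsin r`, the volume of `D_a⁻` is
`(π^{n-1}/n!)·(θ - cos θ · Σ_{j=0}^{n-1} ((2n-2j-2)!!/(2n-2j-1)!!)·sin^{2n-2j-1} θ)`,
double factorials taken with the standard convention `0!! = (-1)!! = 1`. -/
theorem stmt18 (n : ℕ) (hn : 0 < n) (a : ℝ) (ha : a ∈ Ico (0 : ℝ) 1) :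
    let ca : Esp n := WithLp.toLp 2 fun (i : Fin (2 * n)) => if (i : ℕ) = 2 * n - 1 then a else 0
    let Da : Set (Esp n) := Metric.ball ca 1
    let Dm := {x ∈ Da | x ⟨2 * n - 1, by omega⟩ ≤ 0}
    let θ := Real.arcsin (Real.sqrt (1 - a ^ 2))
    volume Dm = ENNReal.ofReal (Real.pi ^ (n - 1) / (n.factorial) *
      (θ - Real.cos θ * ∑ j ∈ Finset.range n,
        ((Nat.doubleFactorial (2 * n - 2 * j - 2) : ℝ) /
            (Nat.doubleFactorial (2 * n - 2 * j - 1))) *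
          Real.sin θ ^ (2 * n - 2 * j - 1))) := by
  obtain ⟨m, rfl⟩ : ∃ m, n = m + 1 := ⟨n - 1, by omega⟩
  intro ca Da Dm θ
  have ha0 : (0:ℝ) ≤ a := ha.1
  have ha1 : a < 1 := ha.2
  have hr0 : (0:ℝ) ≤ 1 - a^2 := by nlinarith
  have hθ0 : 0 ≤ θ := Real.arcsin_nonneg.mpr (Real.sqrt_nonneg _)
  have hθπ : θ ≤ Real.pi/2 := Real.arcsin_le_pi_div_two _
  have hcos : Real.cos θ = a := by
    show Real.cos (Real.arcsin _) = a
    rw [Real.cos_arcsin, Real.sq_sqrt hr0, show (1:ℝ) - (1 - a^2) = a^2 by ring,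
      Real.sqrt_sq ha0]
  have hc : ∀ i : Fin (2*m+1+1), ca i = if (i:ℕ) = 2*m+1 then a else 0 := by
    intro i
    show (if (i:ℕ) = 2*(m+1)-1 then a else 0) = _
    rw [show 2*(m+1)-1 = 2*m+1 from by omega]
  have hDm : Dm = {x : EuclideanSpace ℝ (Fin (2*m+1+1)) |
      dist x ca < 1 ∧ x (Fin.last (2*m+1)) ≤ 0} := by
    ext x
    show x ∈ Metric.ball ca 1 ∧ x ⟨2*(m+1)-1, by omega⟩ ≤ 0 ↔ _
    rw [Metric.mem_ball]
    have hidx : (⟨2*(m+1)-1, by omega⟩ : Fin (2*(m+1))) = Fin.last (2*m+1) := by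
      apply Fin.ext
      show 2*(m+1)-1 = 2*m+1
      omega
    rw [hidx]
    rfl
  rw [hDm]
  refine Eq.trans (my_key (2*m+1) (by omega) a ha1 ca hc) ?_
  -- the integral
  have hcont : Continuous fun s : ℝ => Real.sqrt (1-s^2)^(2*m+1) :=
    ((continuous_const.sub ((continuous_id.pow 2))).sqrt).pow _
  have hint : (∫ t in (a-1)..0, Real.sqrt (1-(t-a)^2) ^ (2*m+1))
      = ∫ x in (0:ℝ)..θ, Real.sin x ^ (2*(m+1)) := by
    have h1 : (fun t : ℝ => Real.sqrt (1-(t-a)^2)^(2*m+1))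
        = (fun t => (fun s : ℝ => Real.sqrt (1-s^2)^(2*m+1)) (a - t)) := by
      funext t
      rw [show (1:ℝ)-(t-a)^2 = 1-(a-t)^2 by ring]
    rw [h1, intervalIntegral.integral_comp_sub_left
      (fun s : ℝ => Real.sqrt (1-s^2)^(2*m+1)) a, sub_zero, show a - (a-1) = 1 by ring]
    have hder : ∀ x ∈ uIcc (0:ℝ) θ, HasDerivAt Real.cos (-Real.sin x) x :=
      fun x _ => Real.hasDerivAt_cos x
    have hsub := intervalIntegral.integral_comp_smul_deriv hder
        (Real.continuous_sin.neg.continuousOn) hcont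
    rw [Real.cos_zero, hcos] at hsub
    have h3 : (∫ x in (0:ℝ)..θ, (-Real.sin x) •
        ((fun s : ℝ => Real.sqrt (1-s^2)^(2*m+1)) ∘ Real.cos) x)
        = - ∫ x in (0:ℝ)..θ, Real.sin x * Real.sqrt (1-(Real.cos x)^2)^(2*m+1) := by
      rw [← intervalIntegral.integral_neg]
      apply intervalIntegral.integral_congr
      intro x _
      simp [Function.comp, smul_eq_mul]
      try ring
    rw [h3] at hsub
    have h4 : (∫ s in a..(1:ℝ), Real.sqrt (1-s^2)^(2*m+1))
        = ∫ x in (0:ℝ)..θ, Real.sin x * Real.sqrt (1-(Real.cos x)^2)^(2*m+1) := by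
      rw [intervalIntegral.integral_symm 1 a, ← hsub, neg_neg]
    rw [h4]
    apply intervalIntegral.integral_congr
    intro x hx
    rw [uIcc_of_le hθ0] at hx
    show Real.sin x * Real.sqrt (1-(Real.cos x)^2)^(2*m+1) = Real.sin x ^ (2*(m+1))
    have hsin : 0 ≤ Real.sin x := Real.sin_nonneg_of_nonneg_of_le_pi hx.1
      (le_trans (le_trans hx.2 hθπ) (by linarith [Real.pi_pos]))
    rw [show (1:ℝ) - Real.cos x^2 = Real.sin x ^2 from by
        have := Real.sin_sq_add_cos_sq x; linarith,
      Real.sqrt_sq hsin, show 2*(m+1) = (2*m+1)+1 from by omega, pow_succ]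
    ring
  rw [hint, my_sinPow (m+1) θ]
  have hκ : (0:ℝ) ≤ Real.sqrt Real.pi ^ (2*m+1) / Real.Gamma ((2*m+1 : ℕ) / 2 + 1) :=
    div_nonneg (pow_nonneg (Real.sqrt_nonneg _) _)
      (Real.Gamma_pos_of_pos (by positivity)).le
  rw [← ENNReal.ofReal_mul hκ]
  congr 1
  have hsumeq : (∑ j ∈ Finset.range (m+1),
        ((Nat.doubleFactorial (2*(m+1)-2*j-2) : ℝ) / (Nat.doubleFactorial (2*(m+1)-2*j-1))) *
          Real.sin θ ^ (2*(m+1)-2*j-1))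
      = ∑ j ∈ Finset.range (m+1),
        ((Nat.doubleFactorial (2*j) : ℝ) / (Nat.doubleFactorial (2*j+1))) *
          Real.sin θ ^ (2*j+1) := by
    rw [← Finset.sum_range_reflect (fun j => ((Nat.doubleFactorial (2*j) : ℝ) /
      (Nat.doubleFactorial (2*j+1))) * Real.sin θ ^ (2*j+1)) (m+1)]
    apply Finset.sum_congr rfl
    intro j hj
    have hj' := Finset.mem_range.mp hj
    have e1 : 2*(m+1)-2*j-2 = 2*(m+1-1-j) := by omega
    have e2 : 2*(m+1)-2*j-1 = 2*(m+1-1-j)+1 := by omega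
    rw [e1, e2]
  rw [show (m+1) - 1 = m from rfl, hsumeq, ← mul_assoc, my_const m]
end
end
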